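/- Let α > 0, κ > 0 and β, η ∈ ℝ with 4κ(κ + β + η) + α² > 0, and define g(d) = log(1 + αd) + (καd² − (β+η)d)/(1 + αd) for real d with 1 + αd > 0, and d̂ = (−α − 2κ + √(4κ(κ+β+η) + α²))/(2κα). Then g is monotone nonincreasing on (−1/α, d̂] ∩ (−1/α, ∞) and monotone nondecreasing on [d̂, ∞) ∩ (−1/α, ∞); in particular, if d̂ > −1/α then g attains its minimum over (−1/α, ∞) at d̂, and if d̂ ≤ −1/α then g is monotone nondecreasing on all of (−1/α, ∞). -/

import Mathlib

theorem stmt_3 (α κ β η : ℝ) (hα : 0 < α) (hκ : 0 < κ)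
    (h : 0 < 4 * κ * (κ + β + η) + α ^ 2) :
    let g : ℝ → ℝ := fun d => Real.log (1 + α * d) + (κ * α * d ^ 2 - (β + η) * d) / (1 + α * d)
    let dhat : ℝ := (-α - 2 * κ + Real.sqrt (4 * κ * (κ + β + η) + α ^ 2)) / (2 * κ * α)
    AntitoneOn g (Set.Ioc (-(1 / α)) dhat ∩ Set.Ioi (-(1 / α))) ∧
      MonotoneOn g (Set.Ici dhat ∩ Set.Ioi (-(1 / α))) ∧
      (-(1 / α) < dhat → ∀ d ∈ Set.Ioi (-(1 / α)), g dhat ≤ g d) ∧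
      (dhat ≤ -(1 / α) → MonotoneOn g (Set.Ioi (-(1 / α)))) := by
  intro g dhat
  set a : ℝ := -(1 / α) with ha
  set r : ℝ := Real.sqrt (4 * κ * (κ + β + η) + α ^ 2) with hrdef
  have hr0 : 0 ≤ r := Real.sqrt_nonneg _
  have hr2 : r ^ 2 = 4 * κ * (κ + β + η) + α ^ 2 := Real.sq_sqrt h.le
  set dlow : ℝ := (-α - 2 * κ - r) / (2 * κ * α) with hdlow
  set N : ℝ → ℝ := fun d => κ * α ^ 2 * d ^ 2 + α * (2 * κ + α) * d + (α - (β + η)) with hN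
  have hκα : (0:ℝ) < 2 * κ * α := by positivity
  have hαinv : α * (1 / α) = 1 := mul_one_div_cancel hα.ne'
  -- positivity of 1 + α d for d > a
  have hq : ∀ d : ℝ, a < d → 0 < 1 + α * d := by
    intro d hd
    have h1 := mul_pos hα (sub_pos.mpr hd)
    rw [ha] at h1
    nlinarith [hαinv]
  -- dlow ≤ a
  have hdlowa : dlow ≤ a := by
    rw [hdlow, div_le_iff₀ hκα]
    have : a * (2 * κ * α) = -(2 * κ) := by
      rw [ha]; field_simp
    rw [this]; nlinarith
  -- factorization
  have hfac : ∀ d : ℝ, N d = κ * α ^ 2 * (d - dhat) * (d - dlow) := by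
    intro d
    have e1 : dhat = (-α - 2 * κ + r) / (2 * κ * α) := rfl
    have e2 : dlow = (-α - 2 * κ - r) / (2 * κ * α) := rfl
    rw [hN, e1, e2]
    field_simp
    nlinarith [hr2]
  -- signs
  have hsign_le : ∀ d : ℝ, a < d → d ≤ dhat → N d ≤ 0 := by
    intro d hd hdh
    rw [hfac d]
    have h1 : d - dhat ≤ 0 := by linarith
    have h2 : 0 < d - dlow := by linarith [hdlowa]
    exact mul_nonpos_of_nonpos_of_nonneg
      (mul_nonpos_of_nonneg_of_nonpos (by positivity) h1) h2.le
  have hsign_ge : ∀ d : ℝ, a < d → dhat ≤ d → 0 ≤ N d := by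
    intro d hd hdh
    rw [hfac d]
    have h1 : 0 ≤ d - dhat := by linarith
    have h2 : 0 < d - dlow := by linarith [hdlowa]
    exact mul_nonneg (mul_nonneg (by positivity) h1) h2.le
  -- derivative
  have key : ∀ d : ℝ, a < d → HasDerivAt g (N d / (1 + α * d) ^ 2) d := by
    intro d hd
    have hqd : 0 < 1 + α * d := hq d hd
    have h1 : HasDerivAt (fun x : ℝ => 1 + α * x) α d := by
      simpa [Pi.add_def] using (hasDerivAt_const d (1:ℝ)).add ((hasDerivAt_id d).const_mul α)
    have hlog : HasDerivAt (fun x : ℝ => Real.log (1 + α * x)) ((1 + α * d)⁻¹ * α) d :=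
      by have := (Real.hasDerivAt_log hqd.ne').comp d h1; exact this
    have hp : HasDerivAt (fun x : ℝ => κ * α * x ^ 2 - (β + η) * x)
        (κ * α * (2 * d) - (β + η)) d := by
      have := ((hasDerivAt_pow 2 d).const_mul (κ * α)).sub ((hasDerivAt_id d).const_mul (β + η))
      simpa [Pi.sub_def, mul_comm, mul_assoc, mul_left_comm] using this
    have hdiv := hp.div h1 hqd.ne'
    have hsum := hlog.add hdiv
    have heq : (1 + α * d)⁻¹ * α +
        ((κ * α * (2 * d) - (β + η)) * (1 + α * d) - (κ * α * d ^ 2 - (β + η) * d) * α) /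
          (1 + α * d) ^ 2 = N d / (1 + α * d) ^ 2 := by
      rw [hN]; field_simp; ring
    rw [heq] at hsum
    exact hsum
  -- antitone part
  have hanti : AntitoneOn g (Set.Ioc a dhat) := by
    apply antitoneOn_of_deriv_nonpos (convex_Ioc a dhat)
    · intro d hd
      exact (key d hd.1).differentiableAt.continuousAt.continuousWithinAt
    · intro d hd
      rw [interior_Ioc] at hd
      exact ((key d hd.1).differentiableAt).differentiableWithinAt
    · intro d hd
      rw [interior_Ioc] at hd
      rw [(key d hd.1).deriv]
      have := hsign_le d hd.1 hd.2.le
      have h2 : (0:ℝ) < (1 + α * d) ^ 2 := pow_pos (hq d hd.1) 2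
      exact div_nonpos_of_nonpos_of_nonneg this h2.le
  -- monotone part
  have hmono : MonotoneOn g (Set.Ici dhat ∩ Set.Ioi a) := by
    apply monotoneOn_of_deriv_nonneg ((convex_Ici dhat).inter (convex_Ioi a))
    · intro d hd
      exact (key d hd.2).differentiableAt.continuousAt.continuousWithinAt
    · intro d hd
      rw [interior_inter, interior_Ici, interior_Ioi] at hd
      exact ((key d hd.2).differentiableAt).differentiableWithinAt
    · intro d hd
      rw [interior_inter, interior_Ici, interior_Ioi] at hd
      rw [(key d hd.2).deriv]
      exact div_nonneg (hsign_ge d hd.2 hd.1.le) (by positivity)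
  have hIoc : Set.Ioc a dhat ∩ Set.Ioi a = Set.Ioc a dhat :=
    Set.inter_eq_left.mpr Set.Ioc_subset_Ioi_self
  refine ⟨by rw [hIoc]; exact hanti, hmono, ?_, ?_⟩
  · intro hda d hd
    rcases le_or_gt d dhat with hle | hlt
    · exact hanti ⟨hd, hle⟩ ⟨hda, le_refl dhat⟩ hle
    · exact hmono ⟨le_refl dhat, hda⟩ ⟨hlt.le, hd⟩ hlt.le
  · intro hda
    intro x hx y hy hxy
    exact hmono ⟨le_trans hda (le_of_lt hx), hx⟩ ⟨le_trans hda (le_of_lt hy), hy⟩ hxy
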